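/- On the seed X-torus X_{i_0} associated to the quiver A_{n-m-1} ⊠ A_{m-1} with vertices (i,j), 1 ≤ i ≤ n-m-1, 1 ≤ j ≤ m-1, the map induced by the involution ∗ of Conf_n(P^{m-1}) is given in cluster coordinates by ∗^*(X_{i,j}) = X_{n-m-i, m-j}^{-1}. -/

import Mathlib

/-- The Hodge star of the wedge `w 0 ∧ … ∧ w (m-2)` of `m-1` vectors in `ℂ^m`
(standard bilinear inner product and volume form). -/
noncomputable def hodge (m : ℕ) (w : Fin (m - 1) → Fin m → ℂ) : Fin m → ℂ := fun k =>
  Matrix.det (Matrix.of fun r c : Fin m =>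
    if hr : (r : ℕ) = 0 then (if c = k then 1 else 0)
    else w ⟨(r : ℕ) - 1, by have := r.isLt; omega⟩ c)

/-- The `r`-th element (in increasing order) of the index set
`I_{i,j} = [1, m-j] ∪ [m+i-j+1, m+i]` (with `I_{i,0} = [1,m]`). -/
def domIdx (m i j : ℕ) (r : Fin m) : ℕ :=
  if (r : ℕ) < m - j then (r : ℕ) + 1 else m + i - j + 1 + ((r : ℕ) - (m - j))

/-- The cluster `A`-coordinate `A_{i,j} = Δ_{I_{i,j}}`: the Plücker coordinate of
the configuration `w` on the index set `I_{i,j}`. -/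
noncomputable def Ac (m n : ℕ) (w : ZMod n → Fin m → ℂ) (i j : ℕ) : ℂ :=
  Matrix.det (Matrix.of fun r c : Fin m => w ((domIdx m i j r : ℕ) : ZMod n) c)

/-- The cluster `X`-coordinate at the vertex `(i,j)` of the quiver
`A_{n-m-1} ⊠ A_{m-1}`:
`X_{i,j} = (A_{i-1,j-1} A_{i,j+1} A_{i+1,j}) / (A_{i-1,j} A_{i+1,j+1} A_{i,j-1})`. -/
noncomputable def Xc (m n : ℕ) (w : ZMod n → Fin m → ℂ) (i j : ℕ) : ℂ :=
  (Ac m n w (i - 1) (j - 1) * Ac m n w i (j + 1) * Ac m n w (i + 1) j) /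
    (Ac m n w (i - 1) j * Ac m n w (i + 1) (j + 1) * Ac m n w i (j - 1))

/-- The involution `∗` at the level of vectors:
`ξ_i = ⋆(v_{n-i+2} ∧ … ∧ v_{n-i+m})` (indices mod `n`). -/
noncomputable def xiVec (m n : ℕ) (v : ZMod n → Fin m → ℂ) : ZMod n → Fin m → ℂ :=
  fun i => hodge m fun t : Fin (m - 1) => v (2 - i + ((t : ℕ) : ZMod n))

namespace Stmt18

variable {m n : ℕ}

lemma castInj (x y : ℕ) (hx : x < n) (hy : y < n) (h : (x : ZMod n) = (y : ZMod n)) : x = y := by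
  have h1 := ZMod.val_natCast_of_lt hx
  have h2 := ZMod.val_natCast_of_lt hy
  rw [← h1, ← h2, h]

lemma castInj1 (x y : ℕ) (hx1 : 1 ≤ x) (hx : x ≤ n) (hy1 : 1 ≤ y) (hy : y ≤ n)
    (h : (x : ZMod n) = (y : ZMod n)) : x = y := by
  have h' : ((x - 1 : ℕ) : ZMod n) = ((y - 1 : ℕ) : ZMod n) := by
    have hx' : (x : ZMod n) = ((x - 1 : ℕ) : ZMod n) + 1 := by
      push_cast [Nat.cast_sub hx1]; ring
    have hy' : (y : ZMod n) = ((y - 1 : ℕ) : ZMod n) + 1 := by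
      push_cast [Nat.cast_sub hy1]; ring
    rw [hx', hy'] at h
    exact add_right_cancel h
  have := castInj (x - 1) (y - 1) (by omega) (by omega) h'
  omega

noncomputable def Del (v : ZMod n → Fin m → ℂ) (f : Fin m → ZMod n) : ℂ :=
  (Matrix.of fun r c : Fin m => v (f r) c).det

noncomputable def Dc (v : ZMod n → Fin m → ℂ) (a : ZMod n) : ℂ :=
  Del v fun r => a + ((r : ℕ) : ZMod n)

noncomputable def Xid (v : ZMod n → Fin m → ℂ) (f : Fin m → ZMod n) : ℂ :=
  (Matrix.of fun r c : Fin m => xiVec m n v (f r) c).det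

noncomputable def Bdet (v : ZMod n → Fin m → ℂ) (a c : ZMod n) : ℂ :=
  (Matrix.of fun r k : Fin m =>
    if (r : ℕ) = 0 then v c k else v (2 - a + (((r : ℕ) - 1 : ℕ) : ZMod n)) k).det

noncomputable def PPc (v : ZMod n → Fin m → ℂ) (a : ZMod n) (K : ℕ) : ℂ :=
  ∏ r ∈ Finset.range K, Dc v (a - (r : ZMod n))

lemma det_rows_ne_zero (v : ZMod n → Fin m → ℂ)
    (hgen : ∀ s : Fin m → ZMod n, Function.Injective s →
      LinearIndependent ℂ (fun r => v (s r)))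
    (s : Fin m → ZMod n) (hs : Function.Injective s) :
    (Matrix.of fun r c : Fin m => v (s r) c).det ≠ 0 := by
  intro h0
  obtain ⟨g, hg0, hgM⟩ := Matrix.exists_vecMul_eq_zero_iff.mpr h0
  have hli := hgen s hs
  rw [Fintype.linearIndependent_iff] at hli
  apply hg0
  funext r
  refine hli g ?_ r
  funext c
  have := congrFun hgM c
  simpa [Matrix.vecMul, dotProduct, Finset.sum_apply] using this

section WithNeZero
variable [NeZero m]

lemma det_row_expand (M0 : Matrix (Fin m) (Fin m) ℂ) (u : Fin m → ℂ) :
    (M0.updateRow 0 u).det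
      = ∑ k, u k * (M0.updateRow 0 (fun c' => if c' = k then 1 else 0)).det := by
  have hu : u = ∑ k, u k • (fun c' => if c' = k then (1 : ℂ) else 0) := by
    funext c'
    simp [Finset.sum_apply]
  have hsum := (Matrix.detRowAlternating (R := ℂ) (n := Fin m)).toMultilinearMap.map_update_sum
      Finset.univ (0 : Fin m) (fun k => u k • (fun c' => if c' = k then (1 : ℂ) else 0)) M0
  have hsmul := fun k : Fin m =>
    (Matrix.detRowAlternating (R := ℂ) (n := Fin m)).toMultilinearMap.map_update_smul
      M0 (0 : Fin m) (u k) (fun c' => if c' = k then (1 : ℂ) else 0)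
  conv_lhs => rw [show M0.updateRow 0 u = Function.update M0 0 u from rfl, hu]
  show Matrix.detRowAlternating
      (Function.update M0 0 (∑ k, u k • (fun c' => if c' = k then (1 : ℂ) else 0))) = _
  rw [show (Matrix.detRowAlternating (Function.update M0 0
      (∑ k, u k • (fun c' => if c' = k then (1 : ℂ) else 0)))) =
    (Matrix.detRowAlternating (R := ℂ) (n := Fin m)).toMultilinearMap
      (Function.update M0 0
        (∑ k ∈ Finset.univ, u k • (fun c' => if c' = k then (1 : ℂ) else 0))) from rfl,
    hsum]
  refine Finset.sum_congr rfl fun k _ => ?_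
  rw [hsmul k]
  rfl

lemma bridge (v : ZMod n → Fin m → ℂ) (a c : ZMod n) :
    ∑ k, xiVec m n v a k * v c k = Bdet v a c := by
  set M0 : Matrix (Fin m) (Fin m) ℂ :=
    Matrix.of fun r k : Fin m =>
      if (r : ℕ) = 0 then 0 else v (2 - a + (((r : ℕ) - 1 : ℕ) : ZMod n)) k with hM0
  have hup : ∀ u : Fin m → ℂ, M0.updateRow 0 u =
      Matrix.of fun r k : Fin m =>
        if (r : ℕ) = 0 then u k else v (2 - a + (((r : ℕ) - 1 : ℕ) : ZMod n)) k := by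
    intro u
    ext r k
    rw [Matrix.updateRow_apply]
    by_cases h : r = 0
    · simp [h, hM0]
    · have h' : ¬((r : ℕ) = 0) := fun hh => h (Fin.ext hh)
      simp [h, h', hM0]
  have hxi : ∀ k, xiVec m n v a k
      = (M0.updateRow 0 (fun c' => if c' = k then 1 else 0)).det := by
    intro k
    rw [hup]
    unfold xiVec hodge
    apply congrArg Matrix.det
    ext r k'
    by_cases h : (r : ℕ) = 0
    · simp only [Matrix.of_apply, dif_pos h, if_pos h]
    · simp only [Matrix.of_apply, dif_neg h, if_neg h]
  have hB : Bdet v a c = (M0.updateRow 0 (v c)).det := by rw [hup]; rfl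
  rw [hB, det_row_expand]
  exact Finset.sum_congr rfl fun k _ => by rw [hxi k]; ring

lemma pairing_det {ι : Type} [Fintype ι] [DecidableEq ι] (v : ZMod n → Fin m → ℂ)
    (e : ι ≃ Fin m) (f g : Fin m → ZMod n) :
    (Matrix.of fun r s : ι => Bdet v (f (e r)) (g (e s))).det = Xid v f * Del v g := by
  have h1 : (Matrix.of fun r s : ι => Bdet v (f (e r)) (g (e s)))
      = ((Matrix.of fun r c : Fin m => xiVec m n v (f r) c)
        * Matrix.transpose (Matrix.of fun s c : Fin m => v (g s) c)).submatrix e e := by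
    ext r s
    rw [Matrix.submatrix_apply, Matrix.mul_apply]
    simp only [Matrix.of_apply, Matrix.transpose_apply]
    exact (bridge v (f (e r)) (g (e s))).symm
  rw [h1, Matrix.det_submatrix_equiv_self, Matrix.det_mul, Matrix.det_transpose]
  rfl

lemma Bdet_zero (v : ZMod n → Fin m → ℂ) (a c : ZMod n) (t : ℕ) (ht : t + 2 ≤ m)
    (hc : c = 2 - a + (t : ZMod n)) : Bdet v a c = 0 := by
  apply Matrix.det_zero_of_row_eq (i := (0 : Fin m)) (j := (⟨t + 1, by omega⟩ : Fin m))
  · intro h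
    have h' := congrArg Fin.val h
    rw [Fin.val_zero] at h'
    simp at h'
  · funext k
    simp only [Matrix.of_apply]
    rw [if_pos (Fin.val_zero m)]
    rw [if_neg (by omega : ¬(t + 1 = 0)), hc]
    norm_num

omit [NeZero m] in
lemma Bdet_cons (v : ZMod n → Fin m → ℂ) (a : ZMod n) :
    Bdet v a (1 - a) = Dc v (1 - a) := by
  apply congrArg Matrix.det
  ext r k
  simp only [Matrix.of_apply]
  by_cases h : (r : ℕ) = 0
  · rw [if_pos h]
    congr 1
    rw [h]
    norm_num
  · rw [if_neg h]
    congr 1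
    have h1 : (1 : ℕ) ≤ (r : ℕ) := by omega
    rw [Nat.cast_sub h1]
    push_cast
    ring

lemma Bdet_ne_zero (hmn : m < n) (v : ZMod n → Fin m → ℂ)
    (hgen : ∀ s : Fin m → ZMod n, Function.Injective s →
      LinearIndependent ℂ (fun r => v (s r)))
    (a c : ZMod n) (h : ∀ t : ℕ, t + 2 ≤ m → c ≠ 2 - a + (t : ZMod n)) :
    Bdet v a c ≠ 0 := by
  set s : Fin m → ZMod n := fun r =>
    if (r : ℕ) = 0 then c else 2 - a + (((r : ℕ) - 1 : ℕ) : ZMod n) with hsdef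
  have heq : Bdet v a c = (Matrix.of fun r k : Fin m => v (s r) k).det := by
    apply congrArg Matrix.det
    ext r k
    simp only [Matrix.of_apply, hsdef]
    by_cases hr : (r : ℕ) = 0
    · rw [if_pos hr, if_pos hr]
    · rw [if_neg hr, if_neg hr]
  rw [heq]
  apply det_rows_ne_zero v hgen s
  intro r1 r2 hr
  simp only [hsdef] at hr
  by_cases h1 : (r1 : ℕ) = 0 <;> by_cases h2 : (r2 : ℕ) = 0
  · exact Fin.ext (by omega)
  · rw [if_pos h1, if_neg h2] at hr
    exact absurd hr (h ((r2 : ℕ) - 1) (by have := r2.isLt; omega))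
  · rw [if_neg h1, if_pos h2] at hr
    exact absurd hr.symm (h ((r1 : ℕ) - 1) (by have := r1.isLt; omega))
  · rw [if_neg h1, if_neg h2] at hr
    have := add_left_cancel hr
    have hval := castInj ((r1 : ℕ) - 1) ((r2 : ℕ) - 1)
      (by have := r1.isLt; omega) (by have := r2.isLt; omega) this
    exact Fin.ext (by omega)

end WithNeZero

def pB (m jv : ℕ) : ℕ := m - jv
def qB (m jv : ℕ) : ℕ := m - (m - jv)

def eL (m jv : ℕ) : Fin (pB m jv) ⊕ Fin (qB m jv) ≃ Fin m :=
  finSumFinEquiv.trans (finCongr (by unfold pB qB; omega))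
def eR (m jv : ℕ) : Fin (qB m jv) ⊕ Fin (pB m jv) ≃ Fin m :=
  finSumFinEquiv.trans (finCongr (by unfold pB qB; omega))
def eSw (m jv : ℕ) : Fin (pB m jv) ⊕ Fin (qB m jv) ≃ Fin m :=
  (Equiv.sumComm _ _).trans (eR m jv)
def eSwL (m jv : ℕ) : Fin (qB m jv) ⊕ Fin (pB m jv) ≃ Fin m :=
  (Equiv.sumComm _ _).trans (eL m jv)

lemma eL_inl (jv : ℕ) (r : Fin (pB m jv)) : ((eL m jv (Sum.inl r)) : ℕ) = (r : ℕ) := by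
  simp [eL]
lemma eL_inr (jv : ℕ) (ρ : Fin (qB m jv)) :
    ((eL m jv (Sum.inr ρ)) : ℕ) = pB m jv + (ρ : ℕ) := by
  simp [eL]
lemma eR_inl (jv : ℕ) (s : Fin (qB m jv)) : ((eR m jv (Sum.inl s)) : ℕ) = (s : ℕ) := by
  simp [eR]
lemma eR_inr (jv : ℕ) (σ : Fin (pB m jv)) :
    ((eR m jv (Sum.inr σ)) : ℕ) = qB m jv + (σ : ℕ) := by
  simp [eR]
lemma eSw_inl (jv : ℕ) (σ : Fin (pB m jv)) :
    ((eSw m jv (Sum.inl σ)) : ℕ) = qB m jv + (σ : ℕ) := by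
  simp [eSw, eR_inr]
lemma eSw_inr (jv : ℕ) (s : Fin (qB m jv)) : ((eSw m jv (Sum.inr s)) : ℕ) = (s : ℕ) := by
  simp [eSw, eR_inl]
lemma eSwL_inl (jv : ℕ) (ρ : Fin (qB m jv)) :
    ((eSwL m jv (Sum.inl ρ)) : ℕ) = pB m jv + (ρ : ℕ) := by
  simp [eSwL, eL_inr]
lemma eSwL_inr (jv : ℕ) (r : Fin (pB m jv)) : ((eSwL m jv (Sum.inr r)) : ℕ) = (r : ℕ) := by
  simp [eSwL, eL_inl]

noncomputable def sgn {α : Type} [DecidableEq α] [Fintype α] (σ : Equiv.Perm α) : ℂ :=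
  ((Equiv.Perm.sign σ : ℤ) : ℂ)

lemma sgn_mul_self {α : Type} [DecidableEq α] [Fintype α] (σ : Equiv.Perm α) :
    sgn σ * sgn σ = 1 := by
  unfold sgn
  rw [← Int.cast_mul, ← Units.val_mul, Int.units_mul_self, Units.val_one, Int.cast_one]

lemma sgn_ne_zero {α : Type} [DecidableEq α] [Fintype α] (σ : Equiv.Perm α) : sgn σ ≠ 0 := by
  intro h
  have := sgn_mul_self σ
  rw [h, mul_zero] at this
  exact zero_ne_one this

lemma Del_comp_perm (v : ZMod n → Fin m → ℂ) (f : Fin m → ZMod n) (σ : Equiv.Perm (Fin m)) :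
    Del v (fun r => f (σ r)) = sgn σ * Del v f := by
  unfold Del sgn
  have h : (Matrix.of fun r c : Fin m => v (f (σ r)) c)
      = (Matrix.of fun r c : Fin m => v (f r) c).submatrix σ id := rfl
  rw [h, Matrix.det_permute]

lemma Xid_comp_perm (v : ZMod n → Fin m → ℂ) (f : Fin m → ZMod n) (σ : Equiv.Perm (Fin m)) :
    Xid v (fun r => f (σ r)) = sgn σ * Xid v f := by
  unfold Xid sgn
  have h : (Matrix.of fun r c : Fin m => xiVec m n v (f (σ r)) c)
      = (Matrix.of fun r c : Fin m => xiVec m n v (f r) c).submatrix σ id := rfl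
  rw [h, Matrix.det_permute]

/-- the `FfullZ` index family: `a = h+1+r`. -/
def FfullZ (n h : ℕ) : Fin m → ZMod n := fun r => (h : ZMod n) + 1 + ((r : ℕ) : ZMod n)

noncomputable def FULLD (v : ZMod n → Fin m → ℂ) (h : ℕ) : ℂ := Xid v (FfullZ n h)

noncomputable def YZD (v : ZMod n → Fin m → ℂ) (jv : ℕ) : ℂ :=
  (Matrix.of fun ρ s : Fin (qB m jv) =>
    Bdet v (((m - jv : ℕ) : ZMod n) + 1 + ((ρ : ℕ) : ZMod n))
      (1 + ((s : ℕ) : ZMod n))).det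

noncomputable def SG (m jv : ℕ) : ℂ :=
  sgn ((eL m jv).trans (eSw m jv).symm) * sgn ((eL m jv).symm.trans (eSw m jv)) *
    sgn ((eR m jv).symm.trans (eSwL m jv)) * sgn (Fin.revPerm : Equiv.Perm (Fin (pB m jv)))


set_option maxHeartbeats 2000000 in
lemma PF (hm : 1 < m) (hn : m + 1 < n) (v : ZMod n → Fin m → ℂ)
    (hgen : ∀ s : Fin m → ZMod n, Function.Injective s →
      LinearIndependent ℂ (fun r => v (s r)))
    (iv jv : ℕ) (hiv : iv ≤ n - m) (hjv : jv ≤ m) :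
    Ac m n (xiVec m n v) iv jv * Ac m n v (n - m - iv) (m - jv) * YZD v jv *
      PPc v (-(iv : ZMod n)) (m - jv)
    = SG m jv * FULLD v 0 * FULLD v iv * (Ac m n v (n - m - iv) (m - jv)) ^ 2 := by
  haveI : NeZero m := ⟨by omega⟩
  have hpq : pB m jv + qB m jv = m := by unfold pB qB; omega
  -- index functions
  set fIZ : Fin m → ZMod n := fun r => ((domIdx m iv jv r : ℕ) : ZMod n) with hfIZ
  set fI'Z : Fin m → ZMod n := fun r => ((domIdx m (n - m - iv) (m - jv) r : ℕ) : ZMod n)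
    with hfI'Z
  set P : ZMod n := ((m - jv : ℕ) : ZMod n) with hP
  set zI : ZMod n := ((iv : ℕ) : ZMod n) with hzI
  -- domIdx computations
  have hdom_lt : ∀ (i' j' : ℕ) (r : Fin m), (r : ℕ) < m - j' →
      ((domIdx m i' j' r : ℕ) : ZMod n) = ((r : ℕ) : ZMod n) + 1 := by
    intro i' j' r hr
    rw [domIdx, if_pos hr]
    push_cast
    ring
  have hdom_ge : ∀ r : Fin m, ¬((r : ℕ) < m - jv) →
      fIZ r = P + zI + 1 + (((r : ℕ) - (m - jv) : ℕ) : ZMod n) := by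
    intro r hr
    rw [hfIZ]
    show ((domIdx m iv jv r : ℕ) : ZMod n) = _
    rw [domIdx, if_neg hr, show m + iv - jv = (m - jv) + iv by omega]
    push_cast
    ring
  have hdom'_ge : ∀ r : Fin m, ¬((r : ℕ) < m - (m - jv)) →
      fI'Z r = 1 - P - zI + (((r : ℕ) - (m - (m - jv)) : ℕ) : ZMod n) := by
    intro r hr
    rw [hfI'Z]
    show ((domIdx m (n - m - iv) (m - jv) r : ℕ) : ZMod n) = _
    rw [domIdx, if_neg hr,
      show m + (n - m - iv) - (m - jv) + 1 + ((r : ℕ) - (m - (m - jv)))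
        = (n - (iv + (m - jv))) + (1 + ((r : ℕ) - (m - (m - jv)))) by omega]
    rw [Nat.cast_add, Nat.cast_sub (show iv + (m - jv) ≤ n by omega), ZMod.natCast_self]
    push_cast
    ring
  -- composed index values
  have cIn1 : ∀ r : Fin (pB m jv), fIZ (eL m jv (Sum.inl r)) = ((r : ℕ) : ZMod n) + 1 := by
    intro r
    rw [hfIZ]
    exact hdom_lt iv jv (eL m jv (Sum.inl r)) (by rw [eL_inl]; have := r.isLt; unfold pB at *; omega)
  have cIn2 : ∀ ρ : Fin (qB m jv),
      fIZ (eL m jv (Sum.inr ρ)) = P + zI + 1 + ((ρ : ℕ) : ZMod n) := by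
    intro ρ
    rw [hdom_ge _ (by rw [eL_inr]; unfold pB; omega)]
    congr 1
    rw [eL_inr, show pB m jv + (ρ : ℕ) - (m - jv) = (ρ : ℕ) by unfold pB; omega]
  have cC1 : ∀ s : Fin (qB m jv), fI'Z (eSw m jv (Sum.inr s)) = ((s : ℕ) : ZMod n) + 1 := by
    intro s
    rw [hfI'Z]
    exact hdom_lt (n - m - iv) (m - jv) (eSw m jv (Sum.inr s))
      (by rw [eSw_inr]; have := s.isLt; unfold qB at *; omega)
  have cC2 : ∀ σ : Fin (pB m jv),
      fI'Z (eSw m jv (Sum.inl σ)) = 1 - P - zI + ((σ : ℕ) : ZMod n) := by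
    intro σ
    rw [hdom'_ge _ (by rw [eSw_inl]; unfold qB; omega)]
    congr 1
    rw [eSw_inl, show qB m jv + (σ : ℕ) - (m - (m - jv)) = (σ : ℕ) by unfold qB; omega]
  -- the blocks
  set QQ : Matrix (Fin (pB m jv)) (Fin (pB m jv)) ℂ :=
    Matrix.of (fun r σ => Bdet v (((r : ℕ) : ZMod n) + 1)
      (1 - P - zI + ((σ : ℕ) : ZMod n))) with hQQ
  set RR : Matrix (Fin (qB m jv)) (Fin (qB m jv)) ℂ :=
    Matrix.of (fun ρ s => Bdet v (P + zI + 1 + ((ρ : ℕ) : ZMod n))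
      (((s : ℕ) : ZMod n) + 1)) with hRR
  set YZ : Matrix (Fin (qB m jv)) (Fin (qB m jv)) ℂ :=
    Matrix.of (fun ρ s => Bdet v (P + 1 + ((ρ : ℕ) : ZMod n))
      (1 + ((s : ℕ) : ZMod n))) with hYZ
  set YZ' : Matrix (Fin (pB m jv)) (Fin (pB m jv)) ℂ :=
    Matrix.of (fun r σ => Bdet v (zI + 1 + ((r : ℕ) : ZMod n))
      (1 - P - zI + ((σ : ℕ) : ZMod n))) with hYZ'
  -- zero helpers
  have hzQ : ∀ (r : Fin (pB m jv)) (s : Fin (qB m jv)),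
      Bdet v (((r : ℕ) : ZMod n) + 1) (((s : ℕ) : ZMod n) + 1) = 0 := by
    intro r s
    apply Bdet_zero v _ _ ((r : ℕ) + (s : ℕ))
      (by have := r.isLt; have := s.isLt; unfold pB qB at *; omega)
    push_cast
    ring
  have hzR : ∀ (ρ : Fin (qB m jv)) (σ : Fin (pB m jv)),
      Bdet v (P + zI + 1 + ((ρ : ℕ) : ZMod n)) (1 - P - zI + ((σ : ℕ) : ZMod n)) = 0 := by
    intro ρ σ
    apply Bdet_zero v _ _ ((ρ : ℕ) + (σ : ℕ))
      (by have := ρ.isLt; have := σ.isLt; unfold pB qB at *; omega)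
    push_cast
    ring
  ----------------------------------------------------------------
  -- Identity 1 : QQ.det * RR.det = sgn σM * (Axi * Ac')
  ----------------------------------------------------------------
  set MM : Matrix (Fin m) (Fin m) ℂ :=
    Matrix.of (fun r s => Bdet v (fIZ r) (fI'Z s)) with hMM
  have h1a : MM.det = Ac m n (xiVec m n v) iv jv * Ac m n v (n - m - iv) (m - jv) := by
    have := pairing_det v (Equiv.refl (Fin m)) fIZ fI'Z
    exact this
  have h1c : MM.submatrix (eL m jv) (eSw m jv)
      = Matrix.fromBlocks QQ 0 0 RR := by
    ext r s
    rcases r with r | ρ <;> rcases s with σ | s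
    · simp only [Matrix.submatrix_apply, hMM, Matrix.of_apply, Matrix.fromBlocks_apply₁₁, hQQ]
      rw [cIn1, cC2]
    · simp only [Matrix.submatrix_apply, hMM, Matrix.of_apply, Matrix.fromBlocks_apply₁₂]
      rw [cIn1, cC1]
      simpa using hzQ r s
    · simp only [Matrix.submatrix_apply, hMM, Matrix.of_apply, Matrix.fromBlocks_apply₂₁]
      rw [cIn2, cC2]
      simpa using hzR ρ σ
    · simp only [Matrix.submatrix_apply, hMM, Matrix.of_apply, Matrix.fromBlocks_apply₂₂, hRR]
      rw [cIn2, cC1]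
  have h1b : (MM.submatrix (eL m jv) (eSw m jv)).det
      = sgn ((eL m jv).trans (eSw m jv).symm) * MM.det := by
    have hp : MM.submatrix (eL m jv) (eSw m jv)
        = (MM.submatrix (eSw m jv) (eSw m jv)).submatrix ((eL m jv).trans (eSw m jv).symm) id := by
      ext r s
      simp [Matrix.submatrix_apply]
    rw [hp, Matrix.det_permute ((eL m jv).trans (eSw m jv).symm)
      (MM.submatrix (eSw m jv) (eSw m jv)), Matrix.det_submatrix_equiv_self]
    rfl
  have E1 : QQ.det * RR.det
      = sgn ((eL m jv).trans (eSw m jv).symm)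
        * (Ac m n (xiVec m n v) iv jv * Ac m n v (n - m - iv) (m - jv)) := by
    rw [← h1a, ← h1b, h1c, Matrix.det_fromBlocks_zero₁₂]
  ----------------------------------------------------------------
  -- Identity 2 : QQ.det * YZ.det = FULLD v 0 * (sgn σQ * Ac')
  ----------------------------------------------------------------
  set AQ : Fin (pB m jv) ⊕ Fin (qB m jv) → ZMod n :=
    Sum.elim (fun r => ((r : ℕ) : ZMod n) + 1) (fun ρ => P + 1 + ((ρ : ℕ) : ZMod n)) with hAQ
  set CQ : Fin (pB m jv) ⊕ Fin (qB m jv) → ZMod n :=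
    Sum.elim (fun σ => 1 - P - zI + ((σ : ℕ) : ZMod n))
      (fun s => ((s : ℕ) : ZMod n) + 1) with hCQ
  set NQ : Matrix (Fin (pB m jv) ⊕ Fin (qB m jv)) (Fin (pB m jv) ⊕ Fin (qB m jv)) ℂ :=
    Matrix.of (fun r s => Bdet v (AQ r) (CQ s)) with hNQ
  have h2a : NQ.det = Xid v (fun x => AQ ((eL m jv).symm x))
      * Del v (fun x => CQ ((eL m jv).symm x)) := by
    have hre : NQ = Matrix.of (fun r s => Bdet v ((fun x => AQ ((eL m jv).symm x)) (eL m jv r))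
        ((fun x => CQ ((eL m jv).symm x)) (eL m jv s))) := by
      ext r s
      simp [hNQ]
    rw [hre]
    exact pairing_det v (eL m jv) (fun x => AQ ((eL m jv).symm x))
      (fun x => CQ ((eL m jv).symm x))
  have h2b : (fun x => AQ ((eL m jv).symm x)) = FfullZ n 0 := by
    have hy : ∀ y, AQ y = FfullZ n 0 (eL m jv y) := by
      intro y
      rcases y with r | ρ
      · rw [hAQ]
        simp only [Sum.elim_inl]
        rw [FfullZ, eL_inl]
        push_cast
        ring
      · rw [hAQ]
        simp only [Sum.elim_inr]
        rw [FfullZ, eL_inr]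
        rw [hP]
        push_cast [pB]
        ring
    funext x
    rw [hy ((eL m jv).symm x), Equiv.apply_symm_apply]
  have h2c : (fun x => CQ ((eL m jv).symm x))
      = fun x => fI'Z (((eL m jv).symm.trans (eSw m jv)) x) := by
    have hy : ∀ y, CQ y = fI'Z (eSw m jv y) := by
      intro y
      rcases y with σ | s
      · rw [hCQ]
        simp only [Sum.elim_inl]
        exact (cC2 σ).symm
      · rw [hCQ]
        simp only [Sum.elim_inr]
        exact (cC1 s).symm
    funext x
    rw [hy ((eL m jv).symm x)]
    rfl
  have h2e : NQ = Matrix.fromBlocks QQ 0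
      (Matrix.of fun (ρ : Fin (qB m jv)) (σ : Fin (pB m jv)) =>
        Bdet v (P + 1 + ((ρ : ℕ) : ZMod n)) (1 - P - zI + ((σ : ℕ) : ZMod n))) YZ := by
    ext r s
    rcases r with r | ρ <;> rcases s with σ | s
    · rfl
    · simp only [hNQ, Matrix.of_apply, hAQ, hCQ, Sum.elim_inl, Sum.elim_inr,
        Matrix.fromBlocks_apply₁₂, Matrix.zero_apply]
      simpa using hzQ r s
    · rfl
    · simp only [hNQ, Matrix.of_apply, hAQ, hCQ, Sum.elim_inr, Matrix.fromBlocks_apply₂₂, hYZ]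
      congr 1
      ring
  have E2 : QQ.det * YZ.det = FULLD v 0
      * (sgn ((eL m jv).symm.trans (eSw m jv)) * Ac m n v (n - m - iv) (m - jv)) := by
    have h2f : NQ.det = QQ.det * YZ.det := by
      rw [h2e, Matrix.det_fromBlocks_zero₁₂]
    rw [← h2f, h2a, h2b, h2c, Del_comp_perm]
    rfl
  ----------------------------------------------------------------
  -- Identity 3 : RR.det * YZ'.det = sgn σR * FULLD v iv * Ac'
  ----------------------------------------------------------------
  set ANR : Fin (qB m jv) ⊕ Fin (pB m jv) → ZMod n :=
    Sum.elim (fun ρ => P + zI + 1 + ((ρ : ℕ) : ZMod n))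
      (fun r => zI + 1 + ((r : ℕ) : ZMod n)) with hANR
  set CNR : Fin (qB m jv) ⊕ Fin (pB m jv) → ZMod n :=
    Sum.elim (fun s => ((s : ℕ) : ZMod n) + 1)
      (fun σ => 1 - P - zI + ((σ : ℕ) : ZMod n)) with hCNR
  set NR : Matrix (Fin (qB m jv) ⊕ Fin (pB m jv)) (Fin (qB m jv) ⊕ Fin (pB m jv)) ℂ :=
    Matrix.of (fun r s => Bdet v (ANR r) (CNR s)) with hNR
  have h3a : NR.det = Xid v (fun x => ANR ((eR m jv).symm x))
      * Del v (fun x => CNR ((eR m jv).symm x)) := by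
    have hre : NR = Matrix.of (fun r s => Bdet v ((fun x => ANR ((eR m jv).symm x)) (eR m jv r))
        ((fun x => CNR ((eR m jv).symm x)) (eR m jv s))) := by
      ext r s
      simp [hNR]
    rw [hre]
    exact pairing_det v (eR m jv) (fun x => ANR ((eR m jv).symm x))
      (fun x => CNR ((eR m jv).symm x))
  have h3b : (fun x => ANR ((eR m jv).symm x))
      = fun x => FfullZ n iv (((eR m jv).symm.trans (eSwL m jv)) x) := by
    have hy : ∀ y, ANR y = FfullZ n iv (eSwL m jv y) := by
      intro y
      rcases y with ρ | r
      · rw [hANR]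
        simp only [Sum.elim_inl]
        rw [FfullZ, eSwL_inl, hP]
        push_cast [pB]
        ring
      · rw [hANR]
        simp only [Sum.elim_inr]
        rw [FfullZ, eSwL_inr]
    funext x
    rw [hy ((eR m jv).symm x)]
    rfl
  have h3c : (fun x => CNR ((eR m jv).symm x)) = fI'Z := by
    have hy : ∀ y, CNR y = fI'Z (eR m jv y) := by
      intro y
      rcases y with s | σ
      · rw [hCNR]
        simp only [Sum.elim_inl]
        rw [hfI'Z]
        exact (hdom_lt (n - m - iv) (m - jv) (eR m jv (Sum.inl s))
          (by rw [eR_inl]; have := s.isLt; unfold qB at *; omega)).symm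
      · rw [hCNR]
        simp only [Sum.elim_inr]
        rw [hdom'_ge _ (by rw [eR_inr]; unfold qB; omega)]
        congr 2
        rw [eR_inr, show qB m jv + (σ : ℕ) - (m - (m - jv)) = (σ : ℕ) by unfold qB; omega]
    funext x
    rw [hy ((eR m jv).symm x), Equiv.apply_symm_apply]
  have h3d : NR = Matrix.fromBlocks RR 0
      (Matrix.of fun (r : Fin (pB m jv)) (s : Fin (qB m jv)) =>
        Bdet v (zI + 1 + ((r : ℕ) : ZMod n)) (((s : ℕ) : ZMod n) + 1))
      YZ' := by
    ext r s
    rcases r with ρ | r <;> rcases s with s | σ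
    · rfl
    · simp only [hNR, Matrix.of_apply, hANR, hCNR, Sum.elim_inl, Sum.elim_inr,
        Matrix.fromBlocks_apply₁₂, Matrix.zero_apply]
      exact hzR ρ σ
    · rfl
    · rfl
  have E3 : RR.det * YZ'.det = sgn ((eR m jv).symm.trans (eSwL m jv)) * FULLD v iv
      * Ac m n v (n - m - iv) (m - jv) := by
    have h3f : NR.det = RR.det * YZ'.det := by
      rw [h3d, Matrix.det_fromBlocks_zero₁₂]
    rw [← h3f, h3a, h3b, h3c, Xid_comp_perm]
    show sgn _ * FULLD v iv * Del v fI'Z = _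
    rfl
  ----------------------------------------------------------------
  -- Identity 4 : sgn rev * YZ'.det = PPc v (-zI) (m - jv)
  ----------------------------------------------------------------
  have E4 : sgn (Fin.revPerm : Equiv.Perm (Fin (pB m jv))) * YZ'.det
      = PPc v (-zI) (m - jv) := by
    set N4 : Matrix (Fin (pB m jv)) (Fin (pB m jv)) ℂ :=
      YZ'.submatrix id (Fin.revPerm : Equiv.Perm (Fin (pB m jv))) with hN4
    have hcol : ∀ s : Fin (pB m jv),
        1 - P - zI + (((Fin.rev s : Fin (pB m jv)) : ℕ) : ZMod n) = -zI - ((s : ℕ) : ZMod n) := by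
      intro s
      rw [Fin.val_rev]
      rw [Nat.cast_sub (by have := s.isLt; omega : (s : ℕ) + 1 ≤ pB m jv)]
      rw [hP]
      push_cast [pB]
      ring
    have h4a : ∀ r s : Fin (pB m jv), s < r → N4 r s = 0 := by
      intro r s hs
      rw [hN4]
      show YZ' r (Fin.rev s) = 0
      rw [hYZ']
      show Bdet v _ _ = 0
      rw [hcol s]
      apply Bdet_zero v _ _ ((r : ℕ) - ((s : ℕ) + 1)) (by have := r.isLt; unfold pB at *; omega)
      rw [Nat.cast_sub (by exact_mod_cast hs : (s : ℕ) + 1 ≤ (r : ℕ))]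
      push_cast
      ring
    have h4b : N4.det = ∏ r, N4 r r := Matrix.det_of_upperTriangular (fun i j hji => h4a i j hji)
    have h4c : ∀ r : Fin (pB m jv), N4 r r = Dc v (-zI - ((r : ℕ) : ZMod n)) := by
      intro r
      rw [hN4]
      show YZ' r (Fin.rev r) = _
      rw [hYZ']
      show Bdet v _ _ = _
      rw [hcol r]
      rw [show -zI - ((r : ℕ) : ZMod n) = 1 - (zI + 1 + ((r : ℕ) : ZMod n)) by ring]
      exact Bdet_cons v _
    have h4d : N4.det = sgn (Fin.revPerm : Equiv.Perm (Fin (pB m jv))) * YZ'.det :=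
      Matrix.det_permute' _ YZ'
    rw [← h4d, h4b]
    rw [Finset.prod_congr rfl (fun r _ => h4c r)]
    rw [show PPc v (-zI) (m - jv)
      = ∏ r ∈ Finset.range (pB m jv), Dc v (-zI - (r : ZMod n)) from rfl]
    exact Fin.prod_univ_eq_prod_range (fun k => Dc v (-zI - (k : ZMod n))) (pB m jv)
  ----------------------------------------------------------------
  -- combine
  ----------------------------------------------------------------
  have hsM := sgn_mul_self ((eL m jv).trans (eSw m jv).symm)
  rw [show YZD v jv = YZ.det from rfl, ← E4,
    show SG m jv = sgn ((eL m jv).trans (eSw m jv).symm) * sgn ((eL m jv).symm.trans (eSw m jv))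
      * sgn ((eR m jv).symm.trans (eSwL m jv))
      * sgn (Fin.revPerm : Equiv.Perm (Fin (pB m jv))) from rfl]
  set sM := sgn ((eL m jv).trans (eSw m jv).symm)
  set sQ := sgn ((eL m jv).symm.trans (eSw m jv))
  set sR := sgn ((eR m jv).symm.trans (eSwL m jv))
  set sRev := sgn (Fin.revPerm : Equiv.Perm (Fin (pB m jv)))
  linear_combination (-(sM * sRev * YZ.det * YZ'.det)) * E1
    + (sM * sRev * sR * FULLD v iv * Ac m n v (n - m - iv) (m - jv)) * E2
    + (sM * sRev * QQ.det * YZ.det) * E3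
    + (-(Ac m n (xiVec m n v) iv jv * Ac m n v (n - m - iv) (m - jv) * sRev
        * YZ.det * YZ'.det)) * hsM

lemma Dc_ne_zero (hmn : m < n) (v : ZMod n → Fin m → ℂ)
    (hgen : ∀ s : Fin m → ZMod n, Function.Injective s →
      LinearIndependent ℂ (fun r => v (s r)))
    (a : ZMod n) : Dc v a ≠ 0 := by
  apply det_rows_ne_zero v hgen
  intro r1 r2 h
  have h' : ((r1 : ℕ) : ZMod n) = ((r2 : ℕ) : ZMod n) := by
    have := add_left_cancel h
    exact this
  exact Fin.ext (castInj _ _ (by have := r1.isLt; omega) (by have := r2.isLt; omega) h')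

lemma Ac_ne_zero (hm : 1 < m) (hn : m + 1 < n) (v : ZMod n → Fin m → ℂ)
    (hgen : ∀ s : Fin m → ZMod n, Function.Injective s →
      LinearIndependent ℂ (fun r => v (s r)))
    (i' j' : ℕ) (h1 : m + i' ≤ n) (h2 : j' ≤ m) : Ac m n v i' j' ≠ 0 := by
  apply det_rows_ne_zero v hgen
  have hb : ∀ r : Fin m, 1 ≤ domIdx m i' j' r ∧ domIdx m i' j' r ≤ n := by
    intro r
    have := r.isLt
    unfold domIdx
    split <;> omega
  have hmono : ∀ r1 r2 : Fin m, (r1 : ℕ) < (r2 : ℕ) →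
      domIdx m i' j' r1 < domIdx m i' j' r2 := by
    intro r1 r2 h
    have := r2.isLt
    unfold domIdx
    split <;> split <;> omega
  intro r1 r2 h
  rcases lt_trichotomy (r1 : ℕ) (r2 : ℕ) with h' | h' | h'
  · exact absurd (castInj1 _ _ (hb r1).1 (hb r1).2 (hb r2).1 (hb r2).2 h)
      (by have := hmono r1 r2 h'; omega)
  · exact Fin.ext h'
  · exact absurd (castInj1 _ _ (hb r1).1 (hb r1).2 (hb r2).1 (hb r2).2 h)
      (by have := hmono r2 r1 h'; omega)

lemma YZD_ne_zero (hm : 1 < m) (hn : m + 1 < n) (v : ZMod n → Fin m → ℂ)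
    (hgen : ∀ s : Fin m → ZMod n, Function.Injective s →
      LinearIndependent ℂ (fun r => v (s r)))
    (jv : ℕ) (hjv : jv ≤ m) : YZD v jv ≠ 0 := by
  haveI : NeZero m := ⟨by omega⟩
  set M : Matrix (Fin (qB m jv)) (Fin (qB m jv)) ℂ :=
    Matrix.of (fun ρ s => Bdet v (((m - jv : ℕ) : ZMod n) + 1 + ((ρ : ℕ) : ZMod n))
      (1 + ((s : ℕ) : ZMod n))) with hM
  have hYZDM : YZD v jv = M.det := rfl
  set N : Matrix (Fin (qB m jv)) (Fin (qB m jv)) ℂ :=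
    M.submatrix id (Fin.revPerm : Equiv.Perm (Fin (qB m jv))) with hN
  have hNz : ∀ ρ s : Fin (qB m jv), ρ < s → N ρ s = 0 := by
    intro ρ s hlt
    have hlt' : (ρ : ℕ) < (s : ℕ) := hlt
    rw [hN]
    show M ρ (Fin.rev s) = 0
    rw [hM]
    show Bdet v _ _ = 0
    apply Bdet_zero v _ _ ((m - jv) + (ρ : ℕ) + (qB m jv - ((s : ℕ) + 1)))
      (by have := s.isLt; have := ρ.isLt; unfold qB at *; omega)
    rw [Fin.val_rev]
    push_cast
    ring
  have hdetN : N.det = ∏ r, N r r := Matrix.det_of_lowerTriangular N (fun i j h => hNz i j h)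
  have hdiag : ∀ ρ : Fin (qB m jv), N ρ ρ ≠ 0 := by
    intro ρ
    rw [hN]
    show M ρ (Fin.rev ρ) ≠ 0
    rw [hM]
    show Bdet v _ _ ≠ 0
    apply Bdet_ne_zero (by omega) v hgen
    intro t ht hceq
    rw [Fin.val_rev] at hceq
    have hteq : (t : ZMod n) = ((m - 1 : ℕ) : ZMod n) := by
      have hm1 : (m - 1 : ℕ) = (m - jv) + (ρ : ℕ) + (qB m jv - ((ρ : ℕ) + 1)) := by
        have := ρ.isLt
        unfold qB at *
        omega
      rw [hm1]
      push_cast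
      linear_combination -hceq
    have := castInj t (m - 1) (by omega) (by omega) hteq
    omega
  have hNne : N.det ≠ 0 := by
    rw [hdetN]
    exact Finset.prod_ne_zero_iff.mpr fun r _ => hdiag r
  intro h0
  apply hNne
  rw [hN, Matrix.det_permute' _ M, ← hYZDM, h0, mul_zero]

lemma FULLD_ne_zero (hm : 1 < m) (hn : m + 1 < n) (v : ZMod n → Fin m → ℂ)
    (hgen : ∀ s : Fin m → ZMod n, Function.Injective s →
      LinearIndependent ℂ (fun r => v (s r)))
    (h : ℕ) : FULLD v h ≠ 0 := by
  haveI : NeZero m := ⟨by omega⟩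
  obtain ⟨m', rfl⟩ : ∃ m', m = m' + 1 := ⟨m - 1, by omega⟩
  set FM : Matrix (Fin (m' + 1)) (Fin (m' + 1)) ℂ :=
    Matrix.of (fun r k => Bdet v (FfullZ n h r) (1 - (h : ZMod n) - ((k : ℕ) : ZMod n)))
      with hFM
  have hpair : FM.det = FULLD v h * Del v (fun k => 1 - (h : ZMod n) - ((k : ℕ) : ZMod n)) := by
    have := pairing_det v (Equiv.refl (Fin (m' + 1))) (FfullZ n h)
      (fun k => 1 - (h : ZMod n) - ((k : ℕ) : ZMod n))
    exact this
  set N : Matrix (Fin (m' + 1)) (Fin (m' + 1)) ℂ :=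
    FM.submatrix id (finRotate (m' + 1)) with hN
  have hNz : ∀ r k : Fin (m' + 1), k < r → N r k = 0 := by
    intro r k hlt
    have hlt' : (k : ℕ) < (r : ℕ) := hlt
    have hkm : (k : ℕ) < m' := by have := r.isLt; omega
    rw [hN]
    show FM r (finRotate (m' + 1) k) = 0
    rw [hFM]
    show Bdet v _ _ = 0
    have hval : ((finRotate (m' + 1) k : Fin (m' + 1)) : ℕ) = (k : ℕ) + 1 := by
      rw [finRotate_succ_apply]
      exact Fin.val_add_one_of_lt (by exact_mod_cast hkm)
    rw [hval]
    apply Bdet_zero v _ _ ((r : ℕ) - ((k : ℕ) + 1)) (by have := r.isLt; omega)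
    rw [FfullZ, Nat.cast_sub (by omega : (k : ℕ) + 1 ≤ (r : ℕ))]
    push_cast
    ring
  have hdetN : N.det = ∏ r, N r r := Matrix.det_of_upperTriangular (fun i j hj => hNz i j hj)
  have hdiag : ∀ r : Fin (m' + 1), N r r ≠ 0 := by
    intro r
    rw [hN]
    show FM r (finRotate (m' + 1) r) ≠ 0
    rw [hFM]
    show Bdet v _ _ ≠ 0
    by_cases hr : (r : ℕ) < m'
    · have hval : ((finRotate (m' + 1) r : Fin (m' + 1)) : ℕ) = (r : ℕ) + 1 := by
        rw [finRotate_succ_apply]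
        exact Fin.val_add_one_of_lt (by exact_mod_cast hr)
      rw [hval]
      have hcol : 1 - (h : ZMod n) - (((r : ℕ) + 1 : ℕ) : ZMod n)
          = 1 - (FfullZ n h r) := by
        rw [FfullZ]
        push_cast
        ring
      rw [hcol, Bdet_cons]
      rw [← hcol]
      have : (1 : ZMod n) - (h : ZMod n) - (((r : ℕ) + 1 : ℕ) : ZMod n)
          = 1 - (FfullZ n h r) := hcol
      rw [this]
      exact fun hc => Dc_ne_zero (by omega) v hgen _ (by rw [← hcol] at hc; rw [hcol] at hc; exact hc)
    · have hrl : (r : ℕ) = m' := by have := r.isLt; omega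
      have hval : ((finRotate (m' + 1) r : Fin (m' + 1)) : ℕ) = 0 := by
        rw [finRotate_succ_apply]
        have : r = Fin.last m' := Fin.ext (by rw [hrl]; rfl)
        rw [this, Fin.last_add_one]
        rfl
      rw [hval]
      apply Bdet_ne_zero (by omega) v hgen
      intro t ht hceq
      rw [FfullZ] at hceq
      have hteq : (t : ZMod n) = ((m' : ℕ) : ZMod n) := by
        push_cast at hceq ⊢
        rw [hrl] at hceq
        linear_combination -hceq
      have := castInj t m' (by omega) (by omega) hteq
      omega
  have hNne : N.det ≠ 0 := by
    rw [hdetN]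
    exact Finset.prod_ne_zero_iff.mpr fun r _ => hdiag r
  intro h0
  apply hNne
  rw [hN, Matrix.det_permute' _ FM, hpair, h0, zero_mul, mul_zero]

lemma SG_ne_zero (m jv : ℕ) : SG m jv ≠ 0 := by
  unfold SG
  exact mul_ne_zero (mul_ne_zero (mul_ne_zero (sgn_ne_zero _) (sgn_ne_zero _))
    (sgn_ne_zero _)) (sgn_ne_zero _)

lemma PPc_peel (v : ZMod n → Fin m → ℂ) (a : ZMod n) (K : ℕ) :
    PPc v a (K + 1) = Dc v a * PPc v (a - 1) K := by
  unfold PPc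
  rw [Finset.prod_range_succ']
  rw [show (((0 : ℕ) : ZMod n)) = 0 from Nat.cast_zero, sub_zero, mul_comm]
  congr 1
  refine Finset.prod_congr rfl fun r _ => ?_
  congr 1
  push_cast
  ring

lemma PPc_ne_zero (hmn : m < n) (v : ZMod n → Fin m → ℂ)
    (hgen : ∀ s : Fin m → ZMod n, Function.Injective s →
      LinearIndependent ℂ (fun r => v (s r)))
    (a : ZMod n) (K : ℕ) : PPc v a K ≠ 0 := by
  unfold PPc
  exact Finset.prod_ne_zero_iff.mpr fun r _ => Dc_ne_zero hmn v hgen _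

end Stmt18

set_option maxHeartbeats 4000000 in
/-- On the seed `X`-torus of the quiver `A_{n-m-1} ⊠ A_{m-1}`, the map induced by
the involution `∗` of `Conf_n(P^{m-1})` is `∗^*(X_{i,j}) = X_{n-m-i, m-j}⁻¹`. -/
theorem stmt_18 (m n : ℕ) (hm : 1 < m) (hn : m + 1 < n)
    (v : ZMod n → Fin m → ℂ)
    (hgen : ∀ s : Fin m → ZMod n, Function.Injective s →
      LinearIndependent ℂ (fun r => v (s r)))
    (i j : ℕ) (hi1 : 1 ≤ i) (hi2 : i ≤ n - m - 1) (hj1 : 1 ≤ j) (hj2 : j ≤ m - 1) :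
    Xc m n (xiVec m n v) i j = (Xc m n v (n - m - i) (m - j))⁻¹ := by
  open Stmt18 in
  classical
  obtain ⟨K0, hK0⟩ : ∃ K0, m - j = K0 + 1 := ⟨m - j - 1, by omega⟩
  obtain ⟨I1, hI1⟩ : ∃ I1, n - m - i = I1 + 1 := ⟨n - m - i - 1, by omega⟩
  have hci : ((i - 1 : ℕ) : ZMod n) = (i : ZMod n) - 1 := by
    rw [Nat.cast_sub hi1, Nat.cast_one]
  have hci1 : ((i + 1 : ℕ) : ZMod n) = (i : ZMod n) + 1 := by push_cast; ring
  have hneg1 : -((i : ZMod n) - 1) = 1 - (i : ZMod n) := by ring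
  have hneg2 : -((i : ZMod n) + 1) = -(i : ZMod n) - 1 := by ring
  have hneg3 : (1 : ZMod n) - (i : ZMod n) - 1 = -(i : ZMod n) := by ring
  -- the six per-factor identities
  have P1 := PF hm hn v hgen (i - 1) (j - 1) (by omega) (by omega)
  have P2 := PF hm hn v hgen i (j + 1) (by omega) (by omega)
  have P3 := PF hm hn v hgen (i + 1) j (by omega) (by omega)
  have P4 := PF hm hn v hgen (i - 1) j (by omega) (by omega)
  have P5 := PF hm hn v hgen (i + 1) (j + 1) (by omega) (by omega)
  have P6 := PF hm hn v hgen i (j - 1) (by omega) (by omega)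
  rw [show n - m - (i - 1) = I1 + 2 by omega, show m - (j - 1) = K0 + 2 by omega,
    hci, hneg1] at P1
  rw [show m - (j + 1) = K0 by omega, hI1] at P2
  rw [show n - m - (i + 1) = I1 by omega, hK0, hci1, hneg2] at P3
  rw [show n - m - (i - 1) = I1 + 2 by omega, hK0, hci, hneg1] at P4
  rw [show n - m - (i + 1) = I1 by omega, show m - (j + 1) = K0 by omega, hci1, hneg2] at P5
  rw [show m - (j - 1) = K0 + 2 by omega, hI1] at P6
  -- peel the PPc products
  rw [show (K0 + 2) = (K0 + 1) + 1 from rfl, PPc_peel, hneg3, PPc_peel] at P1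
  rw [PPc_peel, hneg3] at P4
  rw [show (K0 + 2) = (K0 + 1) + 1 from rfl, PPc_peel] at P6
  -- nonzeroness of all auxiliary quantities
  have hDc1 : Dc v (1 - (i : ZMod n)) ≠ 0 := Dc_ne_zero (by omega) v hgen _
  have hDc2 : Dc v (-(i : ZMod n)) ≠ 0 := Dc_ne_zero (by omega) v hgen _
  have hPPa : PPc v (-(i : ZMod n)) K0 ≠ 0 := PPc_ne_zero (by omega) v hgen _ _
  have hPPb : PPc v (-(i : ZMod n) - 1) K0 ≠ 0 := PPc_ne_zero (by omega) v hgen _ _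
  have hPPc3 : PPc v (-(i : ZMod n) - 1) (K0 + 1) ≠ 0 := PPc_ne_zero (by omega) v hgen _ _
  have hY1 : YZD v (j - 1) ≠ 0 := YZD_ne_zero hm hn v hgen _ (by omega)
  have hY2 : YZD v j ≠ 0 := YZD_ne_zero hm hn v hgen _ (by omega)
  have hY3 : YZD v (j + 1) ≠ 0 := YZD_ne_zero hm hn v hgen _ (by omega)
  have hF0 : FULLD v 0 ≠ 0 := FULLD_ne_zero hm hn v hgen 0
  have hFa : FULLD v (i - 1) ≠ 0 := FULLD_ne_zero hm hn v hgen _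
  have hFb : FULLD v i ≠ 0 := FULLD_ne_zero hm hn v hgen _
  have hFc : FULLD v (i + 1) ≠ 0 := FULLD_ne_zero hm hn v hgen _
  have hAc1 : Ac m n v (I1 + 2) (K0 + 2) ≠ 0 :=
    Ac_ne_zero hm hn v hgen _ _ (by omega) (by omega)
  have hAc2 : Ac m n v (I1 + 1) K0 ≠ 0 := Ac_ne_zero hm hn v hgen _ _ (by omega) (by omega)
  have hAc3 : Ac m n v I1 (K0 + 1) ≠ 0 := Ac_ne_zero hm hn v hgen _ _ (by omega) (by omega)
  have hAc4 : Ac m n v (I1 + 2) (K0 + 1) ≠ 0 :=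
    Ac_ne_zero hm hn v hgen _ _ (by omega) (by omega)
  have hAc5 : Ac m n v I1 K0 ≠ 0 := Ac_ne_zero hm hn v hgen _ _ (by omega) (by omega)
  have hAc6 : Ac m n v (I1 + 1) (K0 + 2) ≠ 0 :=
    Ac_ne_zero hm hn v hgen _ _ (by omega) (by omega)
  have hSG1 : SG m (j - 1) ≠ 0 := SG_ne_zero m _
  have hSG2 : SG m j ≠ 0 := SG_ne_zero m _
  have hSG3 : SG m (j + 1) ≠ 0 := SG_ne_zero m _
  -- denominators of the factor identities
  have hW1 : Ac m n v (I1 + 2) (K0 + 2) * YZD v (j - 1)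
      * (Dc v (1 - (i : ZMod n)) * (Dc v (-(i : ZMod n))
        * PPc v (-(i : ZMod n) - 1) K0)) ≠ 0 := by
    exact mul_ne_zero (mul_ne_zero hAc1 hY1)
      (mul_ne_zero hDc1 (mul_ne_zero hDc2 hPPb))
  have hW2 : Ac m n v (I1 + 1) K0 * YZD v (j + 1) * PPc v (-(i : ZMod n)) K0 ≠ 0 :=
    mul_ne_zero (mul_ne_zero hAc2 hY3) hPPa
  have hW3 : Ac m n v I1 (K0 + 1) * YZD v j * PPc v (-(i : ZMod n) - 1) (K0 + 1) ≠ 0 :=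
    mul_ne_zero (mul_ne_zero hAc3 hY2) hPPc3
  have hW4 : Ac m n v (I1 + 2) (K0 + 1) * YZD v j
      * (Dc v (1 - (i : ZMod n)) * PPc v (-(i : ZMod n)) K0) ≠ 0 :=
    mul_ne_zero (mul_ne_zero hAc4 hY2) (mul_ne_zero hDc1 hPPa)
  have hW5 : Ac m n v I1 K0 * YZD v (j + 1) * PPc v (-(i : ZMod n) - 1) K0 ≠ 0 :=
    mul_ne_zero (mul_ne_zero hAc5 hY3) hPPb
  have hW6 : Ac m n v (I1 + 1) (K0 + 2) * YZD v (j - 1)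
      * (Dc v (-(i : ZMod n)) * PPc v (-(i : ZMod n) - 1) (K0 + 1)) ≠ 0 :=
    mul_ne_zero (mul_ne_zero hAc6 hY1) (mul_ne_zero hDc2 hPPc3)
  -- solve each identity for the xi-side A-coordinate
  have hA1 : Ac m n (xiVec m n v) (i - 1) (j - 1)
      = SG m (j - 1) * FULLD v 0 * FULLD v (i - 1) * Ac m n v (I1 + 2) (K0 + 2) ^ 2
        / (Ac m n v (I1 + 2) (K0 + 2) * YZD v (j - 1)
          * (Dc v (1 - (i : ZMod n)) * (Dc v (-(i : ZMod n))
            * PPc v (-(i : ZMod n) - 1) K0))) := by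
    rw [eq_div_iff hW1]
    linear_combination P1
  have hA2 : Ac m n (xiVec m n v) i (j + 1)
      = SG m (j + 1) * FULLD v 0 * FULLD v i * Ac m n v (I1 + 1) K0 ^ 2
        / (Ac m n v (I1 + 1) K0 * YZD v (j + 1) * PPc v (-(i : ZMod n)) K0) := by
    rw [eq_div_iff hW2]
    linear_combination P2
  have hA3 : Ac m n (xiVec m n v) (i + 1) j
      = SG m j * FULLD v 0 * FULLD v (i + 1) * Ac m n v I1 (K0 + 1) ^ 2
        / (Ac m n v I1 (K0 + 1) * YZD v j * PPc v (-(i : ZMod n) - 1) (K0 + 1)) := by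
    rw [eq_div_iff hW3]
    linear_combination P3
  have hA4 : Ac m n (xiVec m n v) (i - 1) j
      = SG m j * FULLD v 0 * FULLD v (i - 1) * Ac m n v (I1 + 2) (K0 + 1) ^ 2
        / (Ac m n v (I1 + 2) (K0 + 1) * YZD v j
          * (Dc v (1 - (i : ZMod n)) * PPc v (-(i : ZMod n)) K0)) := by
    rw [eq_div_iff hW4]
    linear_combination P4
  have hA5 : Ac m n (xiVec m n v) (i + 1) (j + 1)
      = SG m (j + 1) * FULLD v 0 * FULLD v (i + 1) * Ac m n v I1 K0 ^ 2
        / (Ac m n v I1 K0 * YZD v (j + 1) * PPc v (-(i : ZMod n) - 1) K0) := by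
    rw [eq_div_iff hW5]
    linear_combination P5
  have hA6 : Ac m n (xiVec m n v) i (j - 1)
      = SG m (j - 1) * FULLD v 0 * FULLD v i * Ac m n v (I1 + 1) (K0 + 2) ^ 2
        / (Ac m n v (I1 + 1) (K0 + 2) * YZD v (j - 1)
          * (Dc v (-(i : ZMod n)) * PPc v (-(i : ZMod n) - 1) (K0 + 1))) := by
    rw [eq_div_iff hW6]
    linear_combination P6
  -- nonzeroness of the xi-side coordinates appearing in denominators
  have hB1 : Ac m n (xiVec m n v) (i - 1) j ≠ 0 := by
    rw [hA4]
    exact div_ne_zero (mul_ne_zero (mul_ne_zero (mul_ne_zero hSG2 hF0) hFa)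
      (pow_ne_zero 2 hAc4)) hW4
  have hB2 : Ac m n (xiVec m n v) (i + 1) (j + 1) ≠ 0 := by
    rw [hA5]
    exact div_ne_zero (mul_ne_zero (mul_ne_zero (mul_ne_zero hSG3 hF0) hFc)
      (pow_ne_zero 2 hAc5)) hW5
  have hB3 : Ac m n (xiVec m n v) i (j - 1) ≠ 0 := by
    rw [hA6]
    exact div_ne_zero (mul_ne_zero (mul_ne_zero (mul_ne_zero hSG1 hF0) hFb)
      (pow_ne_zero 2 hAc6)) hW6
  -- now the main computation
  unfold Xc
  rw [inv_div]
  rw [show n - m - i - 1 = I1 by omega, show n - m - i + 1 = I1 + 2 by omega,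
    show m - j - 1 = K0 by omega, show m - j + 1 = K0 + 2 by omega, hI1, hK0]
  rw [div_eq_div_iff (mul_ne_zero (mul_ne_zero hB1 hB2) hB3)
    (mul_ne_zero (mul_ne_zero (Ac_ne_zero hm hn v hgen _ _ (by omega) (by omega))
      (Ac_ne_zero hm hn v hgen _ _ (by omega) (by omega)))
      (Ac_ne_zero hm hn v hgen _ _ (by omega) (by omega)))]
  rw [hA1, hA2, hA3, hA4, hA5, hA6]
  field_simp
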